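/- Let Q be the mod-2 intersection matrix of a weighted tree Γ and let v be a leaf of Γ with odd weight, attached to the vertex w. Let Γ' be the tree obtained by deleting v and changing the parity of the weight of w. Then the corank over ℤ/2 of the intersection matrix of Γ' equals the corank over ℤ/2 of Q. -/

import Mathlib

set_option maxHeartbeats 1000000 in
/-- Neumann's Move 2 (deleting an odd-weight leaf `v` and flipping the
parity of the weight of its neighbor `w`) preserves the corank over ℤ/2 of the mod-2
intersection matrix of a weighted tree. -/
theorem stmt2 (n : ℕ) (G : SimpleGraph (Fin n)) [DecidableRel G.Adj] (hG : G.IsTree)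
    (wt : Fin n → ℤ) (v w : Fin n)
    (hleaf : G.degree v = 1) (hadj : G.Adj v w) (hodd : Odd (wt v)) :
    Module.finrank (ZMod 2) (LinearMap.ker (Matrix.toLin'
      (fun i j : {i : Fin n // i ≠ v} =>
        if (i : Fin n) = (j : Fin n) then
          ((wt i : ZMod 2) + if (i : Fin n) = w then 1 else 0)
        else if G.Adj (i : Fin n) (j : Fin n) then 1 else 0))) =
    Module.finrank (ZMod 2) (LinearMap.ker (Matrix.toLin'
      (fun i j : Fin n =>
        if i = j then ((wt i : ZMod 2)) else if G.Adj i j then 1 else 0))) := by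
  classical
  have hvw : v ≠ w := G.ne_of_adj hadj
  -- the only neighbor of v is w
  have hadjv : ∀ j, G.Adj v j ↔ j = w := by
    obtain ⟨a, ha⟩ := Finset.card_eq_one.mp (hleaf : (G.neighborFinset v).card = 1)
    have hw : w ∈ G.neighborFinset v := by rwa [SimpleGraph.mem_neighborFinset]
    rw [ha, Finset.mem_singleton] at hw
    intro j
    rw [← SimpleGraph.mem_neighborFinset, ha, Finset.mem_singleton, hw]
  have hwt : (wt v : ZMod 2) = 1 := by
    obtain ⟨k, hk⟩ := hodd
    rw [hk]; push_cast
    rw [show ((2 : ZMod 2)) = 0 from rfl]; ring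
  set Q : Matrix (Fin n) (Fin n) (ZMod 2) :=
    (fun i j : Fin n => if i = j then ((wt i : ZMod 2)) else if G.Adj i j then 1 else 0)
    with hQ
  set Q' : Matrix {i : Fin n // i ≠ v} {i : Fin n // i ≠ v} (ZMod 2) :=
    (fun i j : {i : Fin n // i ≠ v} =>
        if (i : Fin n) = (j : Fin n) then
          ((wt i : ZMod 2) + if (i : Fin n) = w then 1 else 0)
        else if G.Adj (i : Fin n) (j : Fin n) then 1 else 0) with hQ'
  -- split off the v term of a mulVec
  have char2 : ∀ a : ZMod 2, a + a = 0 := fun a => CharTwo.add_self_eq_zero a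
  have hsplit : ∀ (y : Fin n → ZMod 2) (i : Fin n),
      Q.mulVec y i = Q i v * y v + ∑ j : {j : Fin n // j ≠ v}, Q i j * y j := by
    intro y i
    rw [Matrix.mulVec, dotProduct,
      ← Finset.add_sum_erase _ _ (Finset.mem_univ v)]
    congr 1
    exact Finset.sum_subtype _ (fun x => by rw [Finset.mem_erase]; simp) _
  -- row v of Q
  have hrowv : ∀ (y : Fin n → ZMod 2), Q.mulVec y v = y v + y w := by
    intro y
    rw [Matrix.mulVec, dotProduct]
    have : ∀ j, Q v j * y j = (if j = v then y j else 0) + (if j = w then y j else 0) := by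
      intro j
      by_cases h1 : j = v
      · subst h1; simp [hQ, hwt, hvw, hvw.symm]
      · by_cases h2 : j = w
        · subst h2; simp [hQ, h1, hvw, hadjv, Ne.symm h1]
        · simp [hQ, Ne.symm h1, h1, h2, (hadjv j).not.mpr h2]
    rw [Finset.sum_congr rfl (fun j _ => this j), Finset.sum_add_distrib]
    simp
  -- rows i ≠ v
  have hrow : ∀ (y : Fin n → ZMod 2) (i : {i : Fin n // i ≠ v}),
      Q'.mulVec (fun j => y j) i
        = Q.mulVec y i + (if (i : Fin n) = w then y w + y v else 0) := by
    intro y i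
    rw [hsplit y i]
    have hQiv : Q (i : Fin n) v = if (i : Fin n) = w then 1 else 0 := by
      have : G.Adj (i : Fin n) v ↔ (i : Fin n) = w := by
        rw [SimpleGraph.adj_comm, hadjv]
      simp [hQ, i.2, this]
    have hsum : Q'.mulVec (fun j => y j) i
        = (∑ j : {j : Fin n // j ≠ v}, Q i j * y j) + (if (i : Fin n) = w then y w else 0) := by
      rw [Matrix.mulVec, dotProduct]
      have : ∀ j : {j : Fin n // j ≠ v}, Q' i j * y j
          = Q i j * y j + (if (i : Fin n) = w ∧ j = i then y j else 0) := by
        intro j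
        by_cases h1 : (i : Fin n) = (j : Fin n)
        · have hji : j = i := Subtype.ext h1.symm
          by_cases h2 : (i : Fin n) = w <;>
            simp [hQ', hQ, h1, h2, hji, add_mul]
        · have hji : ¬ j = i := fun h => h1 (by rw [h])
          simp [hQ', hQ, h1, hji]
      rw [Finset.sum_congr rfl (fun j _ => this j), Finset.sum_add_distrib]
      congr 1
      by_cases h2 : (i : Fin n) = w
      · simp [h2, Finset.sum_ite_eq]
      · simp [h2]
    rw [hsum, hQiv]
    by_cases h2 : (i : Fin n) = w
    · simp only [h2, if_true]
      linear_combination -char2 (y v)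
    · simp [h2]
  -- extension linear map
  have hwne : w ≠ v := hvw.symm
  set ext : ({i : Fin n // i ≠ v} → ZMod 2) →ₗ[ZMod 2] (Fin n → ZMod 2) :=
    { toFun := fun x' j => if h : j = v then x' ⟨w, hwne⟩ else x' ⟨j, h⟩
      map_add' := by intro a b; funext j; by_cases h : j = v <;> simp [h]
      map_smul' := by intro c a; funext j; by_cases h : j = v <;> simp [h] } with hext
  set res : ((Fin n → ZMod 2)) →ₗ[ZMod 2] ({i : Fin n // i ≠ v} → ZMod 2) :=
    LinearMap.funLeft (ZMod 2) (ZMod 2) (fun i => (i : Fin n)) with hres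
  have hresext : ∀ x', res (ext x') = x' := by
    intro x'; funext j; simp [hres, hext, LinearMap.funLeft, j.2]
  -- membership transfers
  have hker1 : ∀ x ∈ LinearMap.ker (Matrix.toLin' Q), x v = x w := by
    intro x hx
    have h0 : Q.mulVec x v = 0 := by
      have := LinearMap.mem_ker.mp hx
      rw [Matrix.toLin'_apply] at this
      exact congrFun this v
    rw [hrowv] at h0
    linear_combination h0 - char2 (x w)
  have hmem2 : ∀ x ∈ LinearMap.ker (Matrix.toLin' Q),
      res x ∈ LinearMap.ker (Matrix.toLin' Q') := by
    intro x hx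
    rw [LinearMap.mem_ker, Matrix.toLin'_apply]
    funext i
    have h0 : Q.mulVec x i = 0 := by
      have := LinearMap.mem_ker.mp hx
      rw [Matrix.toLin'_apply] at this
      exact congrFun this (i : Fin n)
    have := hrow x i
    rw [h0, hker1 x hx] at this
    simpa [hres, LinearMap.funLeft, char2, Function.comp_def] using this
  have hmem1 : ∀ x' ∈ LinearMap.ker (Matrix.toLin' Q'),
      ext x' ∈ LinearMap.ker (Matrix.toLin' Q) := by
    intro x' hx'
    rw [LinearMap.mem_ker, Matrix.toLin'_apply]
    funext i
    have hvval : (ext x') v = x' ⟨w, hwne⟩ := by simp [hext]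
    have hwval : (ext x') w = x' ⟨w, hwne⟩ := by simp [hext, hwne]
    by_cases h : i = v
    · subst h
      rw [hrowv, hvval, hwval]
      exact char2 _
    · have h0 : Q'.mulVec (fun j => (ext x') j) ⟨i, h⟩ = 0 := by
        have := LinearMap.mem_ker.mp hx'
        rw [Matrix.toLin'_apply] at this
        have h2 : (fun j : {j : Fin n // j ≠ v} => (ext x') j) = x' := by
          funext j; exact congrFun (hresext x') j
        rw [h2]
        exact congrFun this ⟨i, h⟩
      have := hrow (ext x') ⟨i, h⟩
      rw [h0, hvval, hwval] at this
      simpa [char2] using this.symm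
  have e : (LinearMap.ker (Matrix.toLin' Q')) ≃ₗ[ZMod 2] (LinearMap.ker (Matrix.toLin' Q)) :=
    { toFun := fun x' => ⟨ext x', hmem1 x' x'.2⟩
      invFun := fun x => ⟨res x, hmem2 x x.2⟩
      map_add' := fun a b => Subtype.ext (map_add ext a.1 b.1)
      map_smul' := fun c a => Subtype.ext (map_smul ext c a.1)
      left_inv := fun a => Subtype.ext (hresext a.1)
      right_inv := by
        intro a
        apply Subtype.ext
        funext j
        show (ext (res a.1)) j = a.1 j
        by_cases h : j = v
        · have h1 : (ext (res a.1)) j = (res a.1) ⟨w, hwne⟩ := by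
            rw [hext]; simp [h]
          rw [h1, hres, LinearMap.funLeft_apply, ← hker1 a.1 a.2, h]
        · have h1 : (ext (res a.1)) j = (res a.1) ⟨j, h⟩ := by
            rw [hext]; simp [h]
          rw [h1, hres, LinearMap.funLeft_apply] }
  exact LinearEquiv.finrank_eq e
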